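/- With D⁺, E, B(τ), X̃, G̃, Q_{ij}(τ) as described, assume X̃ᵀX̃ and Q₀₁(τ) are invertible and set V = (τIₙ + EG̃E)⁻¹. Then τ²·tr(V²) = tr((B(τ))²) + 2τ⁻¹ tr((Q₀₁(τ))⁻¹Q₁₃(τ)) + τ⁻² tr(((Q₀₁(τ))⁻¹Q₁₂(τ))²). -/

import Mathlib

open Matrix

/-- With the setup of the master Woodbury identity and
`V = (τIₙ + EG̃E)⁻¹`, the trace of `V` satisfies
`τ²·tr(V²) = tr((B(τ))²) + 2τ⁻¹ tr((Q₀₁(τ))⁻¹Q₁₃(τ)) + τ⁻² tr(((Q₀₁(τ))⁻¹Q₁₂(τ))²)`. -/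
theorem tau_sq_trace_V_sq
    (n p : ℕ) (hp : p < n) (τ : ℝ) (hτ : 0 < τ)
    (d : Fin n → ℝ) (hd : ∀ i, 0 ≤ d i)
    (Dplus : Matrix (Fin n) (Fin n) ℝ) (hD : Dplus = Matrix.diagonal d)
    (E : Matrix (Fin n) (Fin n) ℝ) (hE : E = Matrix.diagonal (fun i => Real.sqrt (d i)))
    (B : Matrix (Fin n) (Fin n) ℝ)
    (hB : B = ((1 : Matrix (Fin n) (Fin n) ℝ) + τ⁻¹ • Dplus)⁻¹)
    (Xt : Matrix (Fin n) (Fin p) ℝ) (hX : IsUnit (Xtᵀ * Xt).det)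
    (Gt : Matrix (Fin n) (Fin n) ℝ)
    (hGt : Gt = (1 : Matrix (Fin n) (Fin n) ℝ) - Xt * (Xtᵀ * Xt)⁻¹ * Xtᵀ)
    (Q : ℕ → ℕ → Matrix (Fin p) (Fin p) ℝ)
    (hQ : ∀ i j, Q i j = Xtᵀ * Dplus ^ i * B ^ j * Xt)
    (hQinv : IsUnit (Q 0 1).det)
    (V : Matrix (Fin n) (Fin n) ℝ)
    (hV : V = (τ • (1 : Matrix (Fin n) (Fin n) ℝ) + E * Gt * E)⁻¹) :
    τ ^ 2 * (V * V).trace = (B * B).trace + 2 * τ⁻¹ * ((Q 0 1)⁻¹ * Q 1 3).trace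
      + (τ ^ 2)⁻¹ * (((Q 0 1)⁻¹ * Q 1 2) * ((Q 0 1)⁻¹ * Q 1 2)).trace := by
  have hτ0 : τ ≠ 0 := ne_of_gt hτ
  have hbpos : ∀ i, (0:ℝ) < 1 + τ⁻¹ * d i := by
    intro i; have := hd i; positivity
  -- B is diagonal with entries (1 + τ⁻¹ d i)⁻¹
  have hone : (1 : Matrix (Fin n) (Fin n) ℝ) + τ⁻¹ • Matrix.diagonal d
      = Matrix.diagonal (fun i => 1 + τ⁻¹ * d i) := by
    ext i j
    rcases eq_or_ne i j with rfl | hij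
    · simp
    · simp [Matrix.one_apply_ne hij, Matrix.diagonal_apply_ne _ hij]
  have hb : B = Matrix.diagonal (fun i => (1 + τ⁻¹ * d i)⁻¹) := by
    rw [hB, hD, hone]
    apply Matrix.inv_eq_right_inv
    rw [Matrix.diagonal_mul_diagonal]
    have h2 : (fun i => (1 + τ⁻¹ * d i) * (1 + τ⁻¹ * d i)⁻¹) = fun _ : Fin n => (1:ℝ) :=
      funext fun i => mul_inv_cancel₀ (hbpos i).ne'
    rw [h2, Matrix.diagonal_one]
  -- diagonal identities
  have hEE : E * E = Dplus := by
    rw [hE, hD, Matrix.diagonal_mul_diagonal]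
    refine congrArg _ (funext fun i => ?_)
    simpa using Real.mul_self_sqrt (hd i)
  have hEBE : E * (B * E) = Dplus * B := by
    rw [hE, hb, hD]
    simp only [Matrix.diagonal_mul_diagonal]
    refine congrArg _ (funext fun i => ?_)
    try simp only [Pi.mul_apply]
    linear_combination (1 + τ⁻¹ * d i)⁻¹ * Real.mul_self_sqrt (hd i)
  have hEBBE : E * (B * (B * E)) = Dplus * (B * B) := by
    rw [hE, hb, hD]
    simp only [Matrix.diagonal_mul_diagonal]
    refine congrArg _ (funext fun i => ?_)
    try simp only [Pi.mul_apply]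
    linear_combination ((1 + τ⁻¹ * d i)⁻¹ * (1 + τ⁻¹ * d i)⁻¹) * Real.mul_self_sqrt (hd i)
  have hEBBBE : E * (B * (B * (B * E))) = Dplus * (B * (B * B)) := by
    rw [hE, hb, hD]
    simp only [Matrix.diagonal_mul_diagonal]
    refine congrArg _ (funext fun i => ?_)
    try simp only [Pi.mul_apply]
    linear_combination ((1 + τ⁻¹ * d i)⁻¹ * (1 + τ⁻¹ * d i)⁻¹ * (1 + τ⁻¹ * d i)⁻¹) *
      Real.mul_self_sqrt (hd i)
  have hDBval : Dplus * B = τ • (1 : Matrix (Fin n) (Fin n) ℝ) - τ • B := by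
    rw [hD, hb, Matrix.diagonal_mul_diagonal]
    ext i j
    rcases eq_or_ne i j with rfl | hij
    · simp only [Matrix.diagonal_apply_eq, Matrix.sub_apply, Matrix.smul_apply,
        Matrix.one_apply_eq, smul_eq_mul, mul_one]
      have h0 := (hbpos i).ne'
      rw [eq_sub_iff_add_eq, ← add_mul, mul_inv_eq_iff_eq_mul₀ h0]
      field_simp
      ring
    · simp [Matrix.diagonal_apply_ne _ hij, Matrix.one_apply_ne hij]
  have hEBEq : ∀ {m : Type} (Y : Matrix (Fin n) m ℝ),
      E * (B * (E * Y)) = τ • Y - τ • (B * Y) := by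
    intro m Y
    calc E * (B * (E * Y)) = (E * (B * E)) * Y := by simp only [Matrix.mul_assoc]
      _ = τ • Y - τ • (B * Y) := by
          rw [hEBE, hDBval, Matrix.sub_mul, Matrix.smul_mul, Matrix.smul_mul, Matrix.one_mul]
  set S : Matrix (Fin p) (Fin p) ℝ := (Xtᵀ * Xt)⁻¹ with hSdef
  set Qi : Matrix (Fin p) (Fin p) ℝ := (Q 0 1)⁻¹ with hQidef
  have hQ01e : Q 0 1 = Xtᵀ * (B * Xt) := by
    rw [hQ 0 1]
    simp [pow_zero, pow_one, Matrix.mul_one, Matrix.mul_assoc]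
  have hSXXq : ∀ {m : Type} (Y : Matrix (Fin p) m ℝ), S * (Xtᵀ * (Xt * Y)) = Y := by
    intro m Y
    calc S * (Xtᵀ * (Xt * Y)) = (S * (Xtᵀ * Xt)) * Y := by simp only [Matrix.mul_assoc]
      _ = Y := by rw [hSdef, Matrix.nonsing_inv_mul _ hX, Matrix.one_mul]
  have hQXQ : ∀ {m : Type} (Y : Matrix (Fin p) m ℝ), Xtᵀ * (B * (Xt * (Qi * Y))) = Y := by
    intro m Y
    calc Xtᵀ * (B * (Xt * (Qi * Y))) = ((Xtᵀ * (B * Xt)) * Qi) * Y := by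
          simp only [Matrix.mul_assoc]
      _ = Y := by rw [← hQ01e, hQidef, Matrix.mul_nonsing_inv _ hQinv, Matrix.one_mul]
  -- Woodbury
  set Z : Matrix (Fin n) (Fin n) ℝ := E * (Xt * (Qi * (Xtᵀ * (E * B)))) with hZdef
  set M : Matrix (Fin n) (Fin n) ℝ := B * Z with hMdef
  set W : Matrix (Fin n) (Fin n) ℝ := τ⁻¹ • B + (τ⁻¹ * τ⁻¹) • M with hWdef
  set L : Matrix (Fin n) (Fin n) ℝ := E * (Xt * (S * (Xtᵀ * E))) with hLdef
  have hDM : Dplus * M = τ • Z - τ • M := by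
    rw [hMdef, ← Matrix.mul_assoc, hDBval, Matrix.sub_mul, Matrix.smul_mul, Matrix.smul_mul,
      Matrix.one_mul]
  have h1 : (τ • (1 : Matrix (Fin n) (Fin n) ℝ) + Dplus) * W = 1 + τ⁻¹ • Z := by
    rw [hWdef]
    simp only [Matrix.add_mul, Matrix.mul_add, Matrix.smul_mul, Matrix.mul_smul,
      Matrix.one_mul, smul_smul]
    rw [hDBval, hDM]
    match_scalars <;> field_simp <;> ring
  have hLB : L * B = E * (Xt * (S * (Xtᵀ * (E * B)))) := by
    rw [hLdef]; simp only [Matrix.mul_assoc]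
  have hLM : L * M = τ • Z - τ • (L * B) := by
    have e1 : L * M
        = E * (Xt * (S * (Xtᵀ * (E * (B * (E * (Xt * (Qi * (Xtᵀ * (E * B)))))))))) := by
      rw [hLdef, hMdef, hZdef]; simp only [Matrix.mul_assoc]
    rw [e1, hEBEq (Xt * (Qi * (Xtᵀ * (E * B))))]
    simp only [Matrix.mul_sub, Matrix.mul_smul]
    rw [hSXXq, hQXQ, ← hZdef, ← hLB]
  have h2 : L * W = τ⁻¹ • Z := by
    rw [hWdef]
    simp only [Matrix.mul_add, Matrix.mul_smul]
    rw [hLM]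
    match_scalars <;> field_simp <;> ring
  have key1 : τ • (1 : Matrix (Fin n) (Fin n) ℝ) + E * Gt * E
      = τ • (1 : Matrix (Fin n) (Fin n) ℝ) + Dplus - L := by
    rw [hGt, Matrix.mul_sub, Matrix.mul_one, Matrix.sub_mul, hEE, hLdef]
    simp only [Matrix.mul_assoc]
    abel
  have hAW : (τ • (1 : Matrix (Fin n) (Fin n) ℝ) + E * Gt * E) * W = 1 := by
    rw [key1, Matrix.sub_mul, h1, h2]
    abel
  have hVW : V = W := hV.trans (Matrix.inv_eq_right_inv hAW)
  -- Q identities for traces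
  have hQ13e : Xtᵀ * (E * (B * (B * (B * (E * Xt))))) = Q 1 3 := by
    rw [hQ 1 3, pow_one]
    have hB3 : B ^ 3 = B * (B * B) := by rw [pow_succ, pow_two, mul_assoc]
    rw [hB3]
    calc Xtᵀ * (E * (B * (B * (B * (E * Xt)))))
        = Xtᵀ * ((E * (B * (B * (B * E)))) * Xt) := by simp only [Matrix.mul_assoc]
      _ = Xtᵀ * Dplus * (B * (B * B)) * Xt := by
          rw [hEBBBE]; simp only [Matrix.mul_assoc]
  have hQ12e : Xtᵀ * (E * (B * (B * (E * Xt)))) = Q 1 2 := by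
    rw [hQ 1 2, pow_one, pow_two]
    calc Xtᵀ * (E * (B * (B * (E * Xt))))
        = Xtᵀ * ((E * (B * (B * E))) * Xt) := by simp only [Matrix.mul_assoc]
      _ = Xtᵀ * Dplus * (B * B) * Xt := by
          rw [hEBBE]; simp only [Matrix.mul_assoc]
  have hQ12q : ∀ (Y : Matrix (Fin p) (Fin p) ℝ),
      Xtᵀ * (E * (B * (B * (E * (Xt * Y))))) = Q 1 2 * Y := by
    intro Y
    calc Xtᵀ * (E * (B * (B * (E * (Xt * Y)))))
        = (Xtᵀ * (E * (B * (B * (E * Xt))))) * Y := by simp only [Matrix.mul_assoc]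
      _ = Q 1 2 * Y := by rw [hQ12e]
  -- trace identities
  have htrBM : (B * M).trace = (Qi * Q 1 3).trace := by
    have e1 : B * M = (B * (B * (E * Xt))) * (Qi * (Xtᵀ * (E * B))) := by
      rw [hMdef, hZdef]; simp only [Matrix.mul_assoc]
    rw [e1, Matrix.trace_mul_comm]
    congr 1
    calc (Qi * (Xtᵀ * (E * B))) * (B * (B * (E * Xt)))
        = Qi * (Xtᵀ * (E * (B * (B * (B * (E * Xt)))))) := by simp only [Matrix.mul_assoc]
      _ = Qi * Q 1 3 := by rw [hQ13e]
  have htrMB : (M * B).trace = (Qi * Q 1 3).trace := by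
    have e1 : M * B = (B * (E * Xt)) * (Qi * (Xtᵀ * (E * (B * B)))) := by
      rw [hMdef, hZdef]; simp only [Matrix.mul_assoc]
    rw [e1, Matrix.trace_mul_comm]
    congr 1
    calc (Qi * (Xtᵀ * (E * (B * B)))) * (B * (E * Xt))
        = Qi * (Xtᵀ * (E * (B * (B * (B * (E * Xt)))))) := by simp only [Matrix.mul_assoc]
      _ = Qi * Q 1 3 := by rw [hQ13e]
  have htrMM : (M * M).trace = ((Qi * Q 1 2) * (Qi * Q 1 2)).trace := by
    have e1 : M * M = (B * (E * Xt)) *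
        (Qi * (Xtᵀ * (E * (B * (B * (E * (Xt * (Qi * (Xtᵀ * (E * B)))))))))) := by
      rw [hMdef, hZdef]; simp only [Matrix.mul_assoc]
    rw [e1, Matrix.trace_mul_comm]
    congr 1
    calc (Qi * (Xtᵀ * (E * (B * (B * (E * (Xt * (Qi * (Xtᵀ * (E * B)))))))))) * (B * (E * Xt))
        = Qi * (Xtᵀ * (E * (B * (B * (E * (Xt * (Qi *
            (Xtᵀ * (E * (B * (B * (E * Xt)))))))))))) := by simp only [Matrix.mul_assoc]
      _ = Qi * (Xtᵀ * (E * (B * (B * (E * (Xt * (Qi * Q 1 2))))))) := by rw [hQ12e]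
      _ = Qi * (Q 1 2 * (Qi * Q 1 2)) := by rw [hQ12q]
      _ = (Qi * Q 1 2) * (Qi * Q 1 2) := by simp only [Matrix.mul_assoc]
  -- finish
  rw [hVW, hWdef]
  simp only [Matrix.mul_add, Matrix.add_mul, Matrix.smul_mul, Matrix.mul_smul, smul_smul,
    Matrix.trace_add, Matrix.trace_smul, smul_eq_mul]
  rw [htrBM, htrMB, htrMM]
  field_simp
  ring
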